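/- Let δ > 0 and A > 0, and suppose that M₂(x, h) ≤ A h x log x for all x ≥ 2 and all h with 1 ≤ h ≤ x^{1/2 + δ}. Then there is a constant C, depending only on A and δ, such that 𝒞(x) = Σ_{n : p_{n+1} ≤ x} (p_{n+1} − p_n)² ≤ C x log² x for all x ≥ 2. -/

import Mathlib

open scoped Classical
open MeasureTheory

/-- The n-th prime (0-indexed: `nthPrime 0 = 2`). -/
noncomputable def nthPrime (n : ℕ) : ℕ := Nat.nth Nat.Prime n

/-- 𝒞(x) = Σ_{p_{n+1} ≤ x} (p_{n+1} - p_n)². -/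
noncomputable def Csum (x : ℝ) : ℝ :=
  ∑ n ∈ (Finset.range ⌈x⌉₊).filter (fun n => (nthPrime (n + 1) : ℝ) ≤ x),
    ((nthPrime (n + 1) : ℝ) - nthPrime n) ^ 2

/-- The Chebyshev theta function θ(t) = Σ_{p ≤ t} log p. -/
noncomputable def chebTheta (t : ℝ) : ℝ :=
  ∑ p ∈ (Finset.range (⌊t⌋₊ + 1)).filter Nat.Prime, Real.log p

/-- The second moment M₂(x, h) = ∫₁ˣ (θ(y+h) - θ(y) - h)² dy. -/
noncomputable def M2 (x h : ℝ) : ℝ :=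
  ∫ y in (1:ℝ)..x, (chebTheta (y + h) - chebTheta y - h) ^ 2

lemma nthPrime_prime (n : ℕ) : (nthPrime n).Prime :=
  Nat.nth_mem_of_infinite Nat.infinite_setOf_prime n

lemma nthPrime_strictMono : StrictMono nthPrime :=
  Nat.nth_strictMono Nat.infinite_setOf_prime

lemma two_le_nthPrime (n : ℕ) : 2 ≤ nthPrime n := (nthPrime_prime n).two_le

lemma nthPrime_succ_le {q n : ℕ} (hq : q.Prime) (h : nthPrime n < q) :
    nthPrime (n + 1) ≤ q := by
  have hqe : nthPrime (Nat.count Nat.Prime q) = q := Nat.nth_count hq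
  have hlt : n < Nat.count Nat.Prime q := by
    by_contra hle
    push_neg at hle
    have := nthPrime_strictMono.monotone hle
    omega
  calc nthPrime (n + 1) ≤ nthPrime (Nat.count Nat.Prime q) :=
        nthPrime_strictMono.monotone hlt
    _ = q := hqe

lemma chebTheta_nonneg (t : ℝ) : 0 ≤ chebTheta t := by
  apply Finset.sum_nonneg
  intro p hp
  simp only [Finset.mem_filter] at hp
  have : (1 : ℝ) ≤ p := by exact_mod_cast hp.2.one_lt.le
  exact Real.log_nonneg this

lemma chebTheta_mono : Monotone chebTheta := by
  intro s t hst
  apply Finset.sum_le_sum_of_subset_of_nonneg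
  · exact Finset.filter_subset_filter _ (Finset.range_subset_range.2
      (Nat.add_le_add_right (Nat.floor_mono hst) 1))
  · intro p hp _
    simp only [Finset.mem_filter] at hp
    have : (1 : ℝ) ≤ p := by exact_mod_cast hp.2.one_lt.le
    exact Real.log_nonneg this

lemma measurable_chebTheta : Measurable chebTheta :=
  (measurable_from_nat
    (f := fun m : ℕ => ∑ p ∈ (Finset.range (m + 1)).filter Nat.Prime, Real.log p)).comp
    Nat.measurable_floor

lemma chebTheta_congr {n : ℕ} {s t : ℝ} (hs : (nthPrime n : ℝ) ≤ s) (hst : s ≤ t)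
    (ht : t < nthPrime (n + 1)) : chebTheta t = chebTheta s := by
  have h0s : (0 : ℝ) ≤ s := le_trans (by positivity) hs
  unfold chebTheta
  congr 1
  ext q
  simp only [Finset.mem_filter, Finset.mem_range]
  constructor
  · rintro ⟨hq, hqp⟩
    refine ⟨?_, hqp⟩
    by_contra hq2
    push_neg at hq2
    have hqs : nthPrime n < q := by
      have h1 : nthPrime n ≤ ⌊s⌋₊ := Nat.le_floor hs
      omega
    have hge := nthPrime_succ_le hqp hqs
    have hqt : (q : ℝ) ≤ t := by
      have hq' : q ≤ ⌊t⌋₊ := by omega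
      calc (q : ℝ) ≤ (⌊t⌋₊ : ℝ) := by exact_mod_cast hq'
        _ ≤ t := Nat.floor_le (le_trans h0s hst)
    have : (nthPrime (n + 1) : ℝ) ≤ q := by exact_mod_cast hge
    linarith
  · rintro ⟨hq, hqp⟩
    exact ⟨by have := Nat.floor_mono hst; omega, hqp⟩

lemma harmonic_le (m : ℕ) : ∑ t ∈ Finset.range m, (1 : ℝ) / (t + 1) ≤ 1 + Real.log m := by
  induction m with
  | zero => simp
  | succ m ih =>
    rw [Finset.sum_range_succ]
    rcases Nat.eq_zero_or_pos m with rfl | hm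
    · simp
    · have hm1 : (1 : ℝ) ≤ m := by exact_mod_cast hm
      have h2 : Real.log ((m : ℝ) / (m + 1)) ≤ (m : ℝ) / (m + 1) - 1 :=
        Real.log_le_sub_one_of_pos (by positivity)
      rw [Real.log_div (by positivity) (by positivity)] at h2
      have h3 : (m : ℝ) / (m + 1) - 1 = -(1 / (m + 1)) := by field_simp; ring
      rw [h3] at h2
      push_cast
      linarith

lemma key1 {x h : ℝ} (hx : 2 ≤ x) (h1 : 1 ≤ h) :
    ∑ n ∈ (Finset.range ⌈x⌉₊).filter
        (fun n => (nthPrime (n + 1) : ℝ) ≤ x ∧ 2 * h ≤ (nthPrime (n + 1) : ℝ) - nthPrime n),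
      h ^ 2 * ((nthPrime (n + 1) : ℝ) - nthPrime n - h) ≤ M2 x h := by
  set f : ℝ → ℝ := fun y => (chebTheta (y + h) - chebTheta y - h) ^ 2 with hfdef
  set T := (Finset.range ⌈x⌉₊).filter
      (fun n => (nthPrime (n + 1) : ℝ) ≤ x ∧ 2 * h ≤ (nthPrime (n + 1) : ℝ) - nthPrime n) with hT
  set I : ℕ → Set ℝ := fun n => Set.Ioo ((nthPrime n : ℝ)) ((nthPrime (n + 1) : ℝ) - h) with hI
  have hfm : Measurable f := by
    apply Measurable.pow_const
    exact ((measurable_chebTheta.comp (measurable_id.add_const h)).sub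
      measurable_chebTheta).sub measurable_const
  have hfnn : ∀ y, 0 ≤ f y := fun y => sq_nonneg _
  have hmem : ∀ n ∈ T, (nthPrime (n + 1) : ℝ) ≤ x ∧
      2 * h ≤ (nthPrime (n + 1) : ℝ) - nthPrime n := by
    intro n hn
    rw [hT, Finset.mem_filter] at hn
    exact hn.2
  have hione : ∀ n ∈ T, I n ⊆ Set.Ioc 1 x := by
    intro n hn y hy
    obtain ⟨hpx, _⟩ := hmem n hn
    have h2n : (2 : ℝ) ≤ (nthPrime n : ℝ) := by exact_mod_cast two_le_nthPrime n
    exact ⟨by linarith [hy.1], by linarith [hy.2]⟩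
  have hintOn : IntegrableOn f (Set.Ioc 1 x) := by
    apply Measure.integrableOn_of_bounded (M := (chebTheta (x + h) + h) ^ 2)
    · refine (ae_restrict_iff' measurableSet_Ioc).2 (ae_of_all _ ?_)
      intro y hy
      rw [Real.norm_eq_abs, abs_of_nonneg (hfnn y)]
      have h0 : 0 ≤ chebTheta y := chebTheta_nonneg y
      have h2 : chebTheta (y + h) ≤ chebTheta (x + h) :=
        chebTheta_mono (by linarith [hy.2])
      have h3 : 0 ≤ chebTheta (y + h) := chebTheta_nonneg _
      have h4 : chebTheta y ≤ chebTheta (x + h) := chebTheta_mono (by linarith [hy.2])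
      exact sq_le_sq' (by linarith) (by linarith)
    · rw [Real.volume_Ioc]; exact ENNReal.ofReal_ne_top
    · exact hfm.aestronglyMeasurable
  have hval : ∀ n ∈ T, ∀ y ∈ I n, f y = h ^ 2 := by
    intro n hn y hy
    obtain ⟨hy1, hy2⟩ := hy
    have e1 : chebTheta (y + h) = chebTheta y :=
      chebTheta_congr (n := n) hy1.le (by linarith) (by linarith)
    simp only [hfdef, e1]; ring
  have hint_eq : ∀ n ∈ T, ∫ y in I n, f y =
      h ^ 2 * ((nthPrime (n + 1) : ℝ) - nthPrime n - h) := by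
    intro n hn
    obtain ⟨_, hgap⟩ := hmem n hn
    rw [setIntegral_congr_fun measurableSet_Ioo (hval n hn), setIntegral_const,
      Real.volume_real_Ioo_of_le (by linarith), smul_eq_mul]
    ring
  have hdisj2 : ∀ m n : ℕ, m < n → Disjoint (I m) (I n) := by
    intro m n hmn
    rw [hI]
    simp only
    rw [Set.Ioo_disjoint_Ioo]
    have hle : (nthPrime (m + 1) : ℝ) ≤ (nthPrime n : ℝ) := by
      exact_mod_cast nthPrime_strictMono.monotone hmn
    refine le_trans (min_le_left _ _) (le_trans ?_ (le_max_right _ _))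
    linarith
  have hdisj : Set.Pairwise (↑T) (Function.onFun Disjoint I) := by
    intro m _ n _ hmn
    rcases hmn.lt_or_gt with hlt | hlt
    · exact hdisj2 m n hlt
    · exact (hdisj2 n m hlt).symm
  have hxle : (1 : ℝ) ≤ x := by linarith
  calc ∑ n ∈ T, h ^ 2 * ((nthPrime (n + 1) : ℝ) - nthPrime n - h)
      = ∑ n ∈ T, ∫ y in I n, f y := by
        exact Finset.sum_congr rfl fun n hn => (hint_eq n hn).symm
    _ = ∫ y in ⋃ n ∈ T, I n, f y :=
        (integral_biUnion_finset T (fun n _ => measurableSet_Ioo) hdisj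
          (fun n hn => hintOn.mono_set (hione n hn))).symm
    _ ≤ ∫ y in Set.Ioc 1 x, f y := by
        apply setIntegral_mono_set hintOn (ae_of_all _ hfnn)
        exact (Set.iUnion₂_subset hione).eventuallyLE
    _ = M2 x h := (intervalIntegral.integral_of_le hxle).symm

lemma gap_cast (n : ℕ) :
    ((nthPrime (n + 1) - nthPrime n : ℕ) : ℝ) = (nthPrime (n + 1) : ℝ) - nthPrime n :=
  Nat.cast_sub (nthPrime_strictMono (Nat.lt_succ_self n)).le

lemma sum_odd (d : ℕ) : ∑ t ∈ Finset.range d, (2 * (t : ℝ) + 1) = (d : ℝ) ^ 2 := by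
  induction d with
  | zero => simp
  | succ d ih => rw [Finset.sum_range_succ, ih]; push_cast; ring

/-- the crucial count bound derived from key1 + the second-moment hypothesis -/
lemma count_bound (A x h : ℝ) (hx : 2 ≤ x) (h1 : 1 ≤ h)
    (hMx : M2 x h ≤ A * h * x * Real.log x) (k : ℕ) (hk : 2 * h ≤ (k : ℝ)) :
    (((Finset.range ⌈x⌉₊).filter
        (fun n => (nthPrime (n + 1) : ℝ) ≤ x ∧ k ≤ nthPrime (n + 1) - nthPrime n)).card : ℝ)
      * (h ^ 2 * ((k : ℝ) - h)) ≤ A * h * x * Real.log x := by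
  set T := (Finset.range ⌈x⌉₊).filter
      (fun n => (nthPrime (n + 1) : ℝ) ≤ x ∧ 2 * h ≤ (nthPrime (n + 1) : ℝ) - nthPrime n) with hT
  set Q := (Finset.range ⌈x⌉₊).filter
      (fun n => (nthPrime (n + 1) : ℝ) ≤ x ∧ k ≤ nthPrime (n + 1) - nthPrime n) with hQ
  have hQT : Q ⊆ T := by
    intro n hn
    rw [hQ, Finset.mem_filter] at hn
    rw [hT, Finset.mem_filter]
    refine ⟨hn.1, hn.2.1, ?_⟩
    have : ((nthPrime (n + 1) - nthPrime n : ℕ) : ℝ) ≥ (k : ℝ) := by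
      exact_mod_cast hn.2.2
    rw [gap_cast] at this
    linarith
  have hc1 : (Q.card : ℝ) * (h ^ 2 * ((k : ℝ) - h)) ≤
      ∑ n ∈ Q, h ^ 2 * ((nthPrime (n + 1) : ℝ) - nthPrime n - h) := by
    rw [← nsmul_eq_mul]
    apply Finset.card_nsmul_le_sum
    intro n hn
    rw [hQ, Finset.mem_filter] at hn
    have hkg : (k : ℝ) ≤ (nthPrime (n + 1) : ℝ) - nthPrime n := by
      rw [← gap_cast]; exact_mod_cast hn.2.2
    have h2 : (0:ℝ) ≤ h ^ 2 := sq_nonneg h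
    nlinarith
  have hc2 : ∑ n ∈ Q, h ^ 2 * ((nthPrime (n + 1) : ℝ) - nthPrime n - h) ≤
      ∑ n ∈ T, h ^ 2 * ((nthPrime (n + 1) : ℝ) - nthPrime n - h) := by
    apply Finset.sum_le_sum_of_subset_of_nonneg hQT
    intro n hn _
    rw [hT, Finset.mem_filter] at hn
    have := hn.2.2
    nlinarith
  calc (Q.card : ℝ) * (h ^ 2 * ((k : ℝ) - h))
      ≤ ∑ n ∈ T, h ^ 2 * ((nthPrime (n + 1) : ℝ) - nthPrime n - h) := le_trans hc1 hc2
    _ ≤ M2 x h := key1 hx h1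
    _ ≤ A * h * x * Real.log x := hMx

set_option maxHeartbeats 2000000 in
/-- If M₂(x, h) ≤ A h x log x for 1 ≤ h ≤ x^{1/2+δ}, then 𝒞(x) ≤ C x log² x. -/
theorem Csum_from_second_moment (δ A : ℝ) (hδ : 0 < δ) (hA : 0 < A)
    (hM : ∀ x h : ℝ, 2 ≤ x → 1 ≤ h → h ≤ x ^ ((1 : ℝ) / 2 + δ) →
      M2 x h ≤ A * h * x * Real.log x) :
    ∃ C : ℝ, ∀ x : ℝ, 2 ≤ x → Csum x ≤ C * x * Real.log x ^ 2 := by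
  set x₀ : ℝ := max 2 ((A / δ + 1) ^ ((1 : ℝ) / δ)) with hx₀def
  have hx₀2 : (2 : ℝ) ≤ x₀ := le_max_left _ _
  refine ⟨24 * A + 8 + 8 * x₀ ^ 2, ?_⟩
  intro x hx
  set L := Real.log x with hLdef
  have hx0 : (0 : ℝ) < x := by linarith
  have hLlog2 : Real.log 2 ≤ L := Real.log_le_log two_pos hx
  have hLhalf : (1 / 2 : ℝ) < L := by
    have := Real.log_two_gt_d9
    linarith
  have hLpos : (0 : ℝ) < L := by linarith
  -- basic sets
  set S := (Finset.range ⌈x⌉₊).filter (fun n => (nthPrime (n + 1) : ℝ) ≤ x) with hS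
  have hCsum : Csum x = ∑ n ∈ S, ((nthPrime (n + 1) : ℝ) - nthPrime n) ^ 2 := rfl
  have hcardS : (S.card : ℝ) ≤ 2 * x := by
    have h1 : S.card ≤ ⌈x⌉₊ := by
      calc S.card ≤ (Finset.range ⌈x⌉₊).card := Finset.card_filter_le _ _
        _ = ⌈x⌉₊ := Finset.card_range _
    have h2 : (⌈x⌉₊ : ℝ) < x + 1 := Nat.ceil_lt_add_one hx0.le
    have h3 : (S.card : ℝ) ≤ (⌈x⌉₊ : ℝ) := by exact_mod_cast h1
    linarith
  -- gap bounded by x in ℝ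
  have hgapx : ∀ n ∈ S, (0:ℝ) ≤ (nthPrime (n + 1) : ℝ) - nthPrime n ∧
      (nthPrime (n + 1) : ℝ) - nthPrime n ≤ x := by
    intro n hn
    rw [hS, Finset.mem_filter] at hn
    have hp0 : (0:ℝ) ≤ (nthPrime n : ℝ) := by positivity
    have hmono : (nthPrime n : ℝ) ≤ (nthPrime (n+1) : ℝ) := by
      exact_mod_cast (nthPrime_strictMono (Nat.lt_succ_self n)).le
    exact ⟨by linarith, by linarith [hn.2]⟩
  by_cases hxx₀ : x < x₀
  · -- small x : crude bound
    have hcrude : Csum x ≤ 2 * x ^ 3 := by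
      rw [hCsum]
      calc ∑ n ∈ S, ((nthPrime (n + 1) : ℝ) - nthPrime n) ^ 2
          ≤ ∑ _n ∈ S, x ^ 2 := by
            apply Finset.sum_le_sum
            intro n hn
            obtain ⟨hg0, hgx⟩ := hgapx n hn
            nlinarith
        _ = (S.card : ℝ) * x ^ 2 := by rw [Finset.sum_const, nsmul_eq_mul]
        _ ≤ 2 * x * x ^ 2 := by nlinarith [sq_nonneg x]
        _ = 2 * x ^ 3 := by ring
    have hx₀x : x ≤ x₀ := hxx₀.le
    have hL2 : (1:ℝ) ≤ 4 * L ^ 2 := by nlinarith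
    have hxsq : x ^ 2 ≤ x₀ ^ 2 := by nlinarith
    have hp1 : (0:ℝ) ≤ x₀ ^ 2 * x := by positivity
    have hp2 : (0:ℝ) ≤ x * L ^ 2 := by positivity
    calc Csum x ≤ 2 * x ^ 3 := hcrude
      _ ≤ 2 * x₀ ^ 2 * x := by nlinarith
      _ ≤ 8 * x₀ ^ 2 * (x * L ^ 2) := by nlinarith
      _ ≤ (24 * A + 8 + 8 * x₀ ^ 2) * x * L ^ 2 := by nlinarith
  · -- main case : x ≥ x₀
    push_neg at hxx₀
    set X := x ^ ((1 : ℝ) / 2 + δ) with hXdef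
    have hX1 : (1 : ℝ) ≤ X := by
      rw [hXdef]
      apply Real.one_le_rpow (by linarith) (by linarith)
    have hXpos : (0 : ℝ) < X := by linarith
    -- largeness : A * x * L < X^2
    have hX2 : X ^ 2 = x * x ^ (2 * δ) := by
      rw [hXdef, ← Real.rpow_natCast (x ^ ((1:ℝ)/2 + δ)) 2, ← Real.rpow_mul hx0.le]
      rw [show ((1:ℝ)/2 + δ) * (2:ℕ) = 1 + 2 * δ by push_cast; ring]
      rw [Real.rpow_add hx0, Real.rpow_one]
    have hlarge : A * x * L < X ^ 2 := by
      have hlog : L ≤ x ^ δ / δ := Real.log_le_rpow_div hx0.le hδ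
      have hxd : A / δ + 1 ≤ x ^ δ := by
        have h0 : (0:ℝ) ≤ A / δ + 1 := by positivity
        have h1 : ((A / δ + 1) ^ ((1:ℝ)/δ)) ^ δ ≤ x ^ δ :=
          Real.rpow_le_rpow (Real.rpow_nonneg h0 _) (le_trans (le_max_right _ _) hxx₀) hδ.le
        rwa [← Real.rpow_mul h0, one_div_mul_cancel hδ.ne', Real.rpow_one] at h1
      have hxd0 : (0:ℝ) < x ^ δ := Real.rpow_pos_of_pos hx0 δ
      have h2d : x ^ (2 * δ) = x ^ δ * x ^ δ := by
        rw [show (2:ℝ) * δ = δ + δ by ring, Real.rpow_add hx0]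
      have hAL : A * L ≤ (A / δ) * x ^ δ := by
        have := mul_le_mul_of_nonneg_left hlog hA.le
        calc A * L ≤ A * (x ^ δ / δ) := this
          _ = (A / δ) * x ^ δ := by field_simp
      have h5 : A / δ < x ^ δ := lt_of_lt_of_le (by linarith) hxd
      have hfin : (A / δ) * x ^ δ < x ^ δ * x ^ δ := mul_lt_mul_of_pos_right h5 hxd0
      have h6 : A * L < x ^ δ * x ^ δ := lt_of_le_of_lt hAL hfin
      calc A * x * L = x * (A * L) := by ring
        _ < x * (x ^ δ * x ^ δ) := mul_lt_mul_of_pos_left h6 hx0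
        _ = x * x ^ (2 * δ) := by rw [h2d]
        _ = X ^ 2 := hX2.symm
    -- counting sets
    set Nf : ℕ → Finset ℕ :=
      fun k => S.filter (fun n => k ≤ nthPrime (n + 1) - nthPrime n) with hNf
    have hNfeq : ∀ k : ℕ, Nf k = (Finset.range ⌈x⌉₊).filter
        (fun n => (nthPrime (n + 1) : ℝ) ≤ x ∧ k ≤ nthPrime (n + 1) - nthPrime n) := by
      intro k
      simp only [hNf, hS, Finset.filter_filter]
    -- medium gaps bound
    have hN2 : ∀ k : ℕ, 2 ≤ k → (k : ℝ) ≤ 2 * X →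
        ((Nf k).card : ℝ) * (k : ℝ) ^ 2 ≤ 4 * A * x * L := by
      intro k hk2 hk2X
      have hkpos : (0 : ℝ) < (k : ℝ) := by exact_mod_cast Nat.lt_of_lt_of_le two_pos hk2
      have hk2' : (2 : ℝ) ≤ (k : ℝ) := by exact_mod_cast hk2
      have h1' : (1 : ℝ) ≤ (k : ℝ) / 2 := by linarith
      have hhX : (k : ℝ) / 2 ≤ x ^ ((1 : ℝ) / 2 + δ) := by
        rw [← hXdef]; linarith
      have hMx := hM x ((k : ℝ) / 2) hx h1' hhX
      have hcb := count_bound A x ((k : ℝ) / 2) hx h1' hMx k (by linarith)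
      rw [← hNfeq] at hcb
      have h8 : ((Nf k).card : ℝ) * (k : ℝ) ^ 2 * (k : ℝ) ≤ 4 * A * x * L * (k : ℝ) := by
        linarith [hcb]
      exact le_of_mul_le_mul_right h8 hkpos
    -- huge gaps are absent
    have hN0 : ∀ k : ℕ, 2 * X < (k : ℝ) → (Nf k).card = 0 := by
      intro k hk2X
      have hMx := hM x X hx hX1 (le_of_eq hXdef)
      have hcb := count_bound A x X hx hX1 hMx k (by linarith)
      rw [← hNfeq] at hcb
      have hNnn : (0 : ℝ) ≤ ((Nf k).card : ℝ) := Nat.cast_nonneg _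
      have hstep : ((Nf k).card : ℝ) * (X ^ 2 * X) ≤
          ((Nf k).card : ℝ) * (X ^ 2 * ((k : ℝ) - X)) := by
        apply mul_le_mul_of_nonneg_left _ hNnn
        nlinarith [sq_nonneg X]
      have h9 : ((Nf k).card : ℝ) * X ^ 2 * X ≤ A * x * L * X := by linarith [hcb]
      have h10 : ((Nf k).card : ℝ) * X ^ 2 ≤ A * x * L := le_of_mul_le_mul_right h9 hXpos
      have h11 : ((Nf k).card : ℝ) * X ^ 2 < 1 * X ^ 2 := by nlinarith [hlarge]
      have h12 : ((Nf k).card : ℝ) < 1 := lt_of_mul_lt_mul_right h11 (sq_nonneg X)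
      exact Nat.lt_one_iff.mp (by exact_mod_cast h12)
    -- decomposition of Csum
    set Tm := ⌊x⌋₊ with hTm
    have hgle : ∀ n ∈ S, nthPrime (n + 1) - nthPrime n ≤ Tm := by
      intro n hn
      rw [hS, Finset.mem_filter] at hn
      have : nthPrime (n + 1) ≤ Tm := Nat.le_floor hn.2
      omega
    have hA1 : Csum x = ∑ t ∈ Finset.range Tm, (2 * (t : ℝ) + 1) * ((Nf (t + 1)).card : ℝ) := by
      rw [hCsum]
      calc ∑ n ∈ S, ((nthPrime (n + 1) : ℝ) - nthPrime n) ^ 2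
          = ∑ n ∈ S, ∑ t ∈ Finset.range (nthPrime (n + 1) - nthPrime n),
              (2 * (t : ℝ) + 1) := by
            refine Finset.sum_congr rfl fun n _ => ?_
            rw [sum_odd, gap_cast]
        _ = ∑ n ∈ S, ∑ t ∈ Finset.range Tm,
              (if t < nthPrime (n + 1) - nthPrime n then 2 * (t : ℝ) + 1 else 0) := by
            refine Finset.sum_congr rfl fun n hn => ?_
            rw [← Finset.sum_filter]
            congr 1
            ext t
            simp only [Finset.mem_filter, Finset.mem_range]
            have := hgle n hn
            omega
        _ = ∑ t ∈ Finset.range Tm, ∑ n ∈ S,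
              (if t < nthPrime (n + 1) - nthPrime n then 2 * (t : ℝ) + 1 else 0) :=
            Finset.sum_comm
        _ = ∑ t ∈ Finset.range Tm, (2 * (t : ℝ) + 1) * ((Nf (t + 1)).card : ℝ) := by
            refine Finset.sum_congr rfl fun t _ => ?_
            rw [← Finset.sum_filter, Finset.sum_const, nsmul_eq_mul, mul_comm]
            have he : S.filter (fun n => t < nthPrime (n + 1) - nthPrime n) = Nf (t + 1) := by
              rw [hNf]
              apply Finset.filter_congr
              intro n _
              omega
            rw [he]
    -- pointwise bound
    have hbound : ∀ t ∈ Finset.range Tm, (2 * (t : ℝ) + 1) * ((Nf (t + 1)).card : ℝ) ≤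
        8 * A * x * L / ((t : ℝ) + 1) + (if t = 0 then 2 * x else 0) := by
      intro t _
      by_cases ht : t = 0
      · subst ht
        simp only [if_pos rfl]
        have hc1 : ((Nf 1).card : ℝ) ≤ (S.card : ℝ) := by
          exact_mod_cast Finset.card_filter_le S _
        have hpos : (0 : ℝ) ≤ 8 * A * x * L / ((0 : ℝ) + 1) := by positivity
        push_cast
        nlinarith
      · rw [if_neg ht]
        have ht1 : 1 ≤ t := Nat.one_le_iff_ne_zero.2 ht
        have htpos : (0 : ℝ) < (t : ℝ) + 1 := by positivity
        have hNnn : (0 : ℝ) ≤ ((Nf (t + 1)).card : ℝ) := Nat.cast_nonneg _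
        by_cases hk2X : ((t + 1 : ℕ) : ℝ) ≤ 2 * X
        · have hB2 := hN2 (t + 1) (by omega) hk2X
          rw [add_zero, le_div_iff₀ htpos]
          push_cast at hB2 ⊢
          nlinarith [mul_nonneg hNnn (le_of_lt htpos)]
        · push_neg at hk2X
          rw [hN0 (t + 1) hk2X]
          simp only [Nat.cast_zero, mul_zero]
          positivity
    -- sum up
    have hTm2 : 2 ≤ Tm := Nat.le_floor (by exact_mod_cast hx)
    have hTmx : (Tm : ℝ) ≤ x := Nat.floor_le hx0.le
    have hTmpos : (0 : ℝ) < (Tm : ℝ) := by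
      have : (0:ℕ) < Tm := by omega
      exact_mod_cast this
    have hlogTm : Real.log (Tm : ℝ) ≤ L := Real.log_le_log hTmpos hTmx
    have hharm : ∑ t ∈ Finset.range Tm, (1 : ℝ) / ((t : ℝ) + 1) ≤ 1 + L :=
      le_trans (harmonic_le Tm) (by linarith)
    have he1 : ∑ t ∈ Finset.range Tm, 8 * A * x * L / ((t : ℝ) + 1) =
        8 * A * x * L * ∑ t ∈ Finset.range Tm, (1 : ℝ) / ((t : ℝ) + 1) := by
      rw [Finset.mul_sum]
      refine Finset.sum_congr rfl fun t _ => ?_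
      ring
    have he2 : ∑ t ∈ Finset.range Tm, (if t = 0 then 2 * x else 0) ≤ 2 * x := by
      rw [Finset.sum_ite_eq' (Finset.range Tm) 0 (fun _ => 2 * x)]
      split_ifs
      · exact le_rfl
      · positivity
    have hAxL : (0 : ℝ) ≤ 8 * A * x * L := by positivity
    have hfinal : Csum x ≤ 8 * A * x * L * (1 + L) + 2 * x := by
      rw [hA1]
      calc ∑ t ∈ Finset.range Tm, (2 * (t : ℝ) + 1) * ((Nf (t + 1)).card : ℝ)
          ≤ ∑ t ∈ Finset.range Tm,
              (8 * A * x * L / ((t : ℝ) + 1) + (if t = 0 then 2 * x else 0)) :=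
            Finset.sum_le_sum hbound
        _ = (∑ t ∈ Finset.range Tm, 8 * A * x * L / ((t : ℝ) + 1)) +
              ∑ t ∈ Finset.range Tm, (if t = 0 then 2 * x else 0) :=
            Finset.sum_add_distrib
        _ ≤ 8 * A * x * L * (1 + L) + 2 * x := by
            rw [he1]
            have := mul_le_mul_of_nonneg_left hharm hAxL
            linarith
    have k1 : 8 * A * x * L ≤ 16 * A * x * L ^ 2 := by
      nlinarith [mul_pos (mul_pos hA hx0) hLpos]
    have hL2' : (1 : ℝ) ≤ 4 * L ^ 2 := by nlinarith
    have k2 : 2 * x ≤ 8 * x * L ^ 2 := by nlinarith [mul_le_mul_of_nonneg_left hL2' hx0.le]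
    have k3 : (0 : ℝ) ≤ 8 * x₀ ^ 2 * (x * L ^ 2) := by positivity
    nlinarith [hfinal]
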